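/- Let K be a convex body in ℝ^d and let c be the centroid of a maximal-volume simplex contained in K. Then K − c ⊆ −d·(K − c). -/

import Mathlib

open Pointwise MeasureTheory

private lemma det_id_add_smulRight {E : Type*} [AddCommGroup E] [Module ℝ E]
    [FiniteDimensional ℝ E] (f : E →ₗ[ℝ] ℝ) (v : E) :
    LinearMap.det (LinearMap.id + f.smulRight v) = 1 + f v := by
  classical
  set b := Module.finBasis ℝ E with hb
  rw [← LinearMap.det_toMatrix b]
  have h : LinearMap.toMatrix b b (f.smulRight v)
      = Matrix.replicateCol Unit (fun i => b.repr v i) * Matrix.replicateRow Unit (fun j => f (b j)) := by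
    ext i j
    simp [LinearMap.toMatrix_apply, Matrix.mul_apply, Matrix.replicateCol, Matrix.replicateRow, mul_comm]
  rw [map_add, LinearMap.toMatrix_id, h, Matrix.det_one_add_replicateCol_mul_replicateRow]
  congr 1
  have hfv : f v = ∑ j, f (b j) * b.repr v j := by
    conv_lhs => rw [← b.sum_repr v]
    rw [map_sum]
    exact Finset.sum_congr rfl fun j _ => by rw [f.map_smul, smul_eq_mul, mul_comm]
  rw [hfv, dotProduct]

/-- The affine map `p ↦ p + (g p) • v`. -/
private def pushMap {E : Type*} [AddCommGroup E] [Module ℝ E] (g : E →ᵃ[ℝ] ℝ) (v : E) :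
    E →ᵃ[ℝ] E where
  toFun p := p + g p • v
  linear := LinearMap.id + g.linear.smulRight v
  map_vadd' p q := by
    have hg : g (q + p) = g.linear q + g p := g.map_vadd p q
    simp only [vadd_eq_add, LinearMap.add_apply, LinearMap.id_apply, LinearMap.smulRight_apply]
    rw [hg, add_smul]
    abel

private lemma pushMap_apply {E : Type*} [AddCommGroup E] [Module ℝ E] (g : E →ᵃ[ℝ] ℝ) (v : E)
    (p : E) : pushMap g v p = p + g p • v := rfl

private lemma pushMap_linear {E : Type*} [AddCommGroup E] [Module ℝ E] (g : E →ᵃ[ℝ] ℝ) (v : E) :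
    (pushMap g v).linear = LinearMap.id + g.linear.smulRight v := rfl

theorem simplex_centroid_inclusion (d : ℕ) (K : Set (EuclideanSpace ℝ (Fin d)))
    (hKc : IsCompact K) (hKconv : Convex ℝ K) (hKint : (interior K).Nonempty)
    (w : Fin (d + 1) → EuclideanSpace ℝ (Fin d))
    (hw : AffineIndependent ℝ w)
    (hwK : convexHull ℝ (Set.range w) ⊆ K)
    (hmax : ∀ w' : Fin (d + 1) → EuclideanSpace ℝ (Fin d),
      convexHull ℝ (Set.range w') ⊆ K →
      volume (convexHull ℝ (Set.range w')) ≤ volume (convexHull ℝ (Set.range w)))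
    (c : EuclideanSpace ℝ (Fin d))
    (hc : c = ((d : ℝ) + 1)⁻¹ • ∑ i, w i) :
    (fun x => x - c) '' K ⊆ (-(d : ℝ)) • ((fun x => x - c) '' K) := by
  classical
  have hcard : Fintype.card (Fin (d + 1)) = Module.finrank ℝ (EuclideanSpace ℝ (Fin d)) + 1 := by
    simp [finrank_euclideanSpace_fin]
  have hspan : affineSpan ℝ (Set.range w) = ⊤ :=
    hw.affineSpan_eq_top_iff_card_eq_finrank_add_one.mpr hcard
  let b : AffineBasis (Fin (d + 1)) ℝ (EuclideanSpace ℝ (Fin d)) := ⟨w, hw, hspan⟩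
  have hbw : ⇑b = w := rfl
  set S := convexHull ℝ (Set.range w) with hS
  -- `S` has positive volume
  have hSne : (interior S).Nonempty := by
    refine ⟨Finset.univ.centroid ℝ w, ?_⟩
    have := b.centroid_mem_interior_convexHull
    rwa [hbw] at this
  have hSpos : 0 < volume S :=
    lt_of_lt_of_le (isOpen_interior.measure_pos volume hSne) (measure_mono interior_subset)
  have hSfin : volume S < ⊤ := (measure_mono hwK).trans_lt hKc.measure_lt_top
  -- barycentric coordinates of points of `K` are bounded by 1 in absolute value
  have key : ∀ x ∈ K, ∀ j, |b.coord j x| ≤ 1 := by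
    intro x hx j
    set T := pushMap (b.coord j) (x - w j) with hT
    have hTw : ∀ i, T (w i) = Function.update w j x i := by
      intro i
      by_cases hij : i = j
      · subst hij
        have h1 : b.coord i (w i) = 1 := b.coord_apply_eq i
        rw [pushMap_apply, h1, one_smul, Function.update_self]
        abel
      · have h0 : b.coord j (w i) = 0 := b.coord_apply_ne (Ne.symm hij)
        rw [pushMap_apply, h0, zero_smul, add_zero, Function.update_of_ne hij]
    have himg : T '' S = convexHull ℝ (Set.range (Function.update w j x)) := by
      rw [hS, AffineMap.image_convexHull, ← Set.range_comp]
      have : ⇑T ∘ w = Function.update w j x := funext hTw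
      rw [this]
    -- compute the volume of `T '' S`
    have hdet : LinearMap.det T.linear = b.coord j x := by
      rw [hT, pushMap_linear, det_id_add_smulRight]
      have : (b.coord j).linear (x - w j) = b.coord j x - b.coord j (w j) :=
        (b.coord j).linearMap_vsub x (w j)
      have h2 : b.coord j (w j) = 1 := b.coord_apply_eq j
      rw [this, h2]
      ring
    have hTdecomp : ∀ p, T p = T.linear p + (b.coord j 0) • (x - w j) := by
      intro p
      rw [pushMap_apply, pushMap_linear]
      simp only [LinearMap.add_apply, LinearMap.id_apply, LinearMap.smulRight_apply]
      have : b.coord j p = (b.coord j).linear p + b.coord j 0 := by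
        have := (b.coord j).map_vadd (0 : EuclideanSpace ℝ (Fin d)) p
        simpa [vadd_eq_add] using this
      rw [this, add_smul]
      abel
    have hvol : volume (T '' S) = ENNReal.ofReal |b.coord j x| * volume S := by
      have h1 : T '' S = (fun y => y + (b.coord j 0) • (x - w j)) '' (T.linear '' S) := by
        rw [← Set.image_comp]
        exact Set.image_congr' hTdecomp
      rw [h1]
      simp only [Set.image_add_right, measure_preimage_add_right]
      rw [Measure.addHaar_image_linearMap, hdet]
    -- maximality
    have hsub : convexHull ℝ (Set.range (Function.update w j x)) ⊆ K := by
      apply convexHull_min _ hKconv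
      rintro _ ⟨i, rfl⟩
      by_cases hij : i = j
      · subst hij; rw [Function.update_self]; exact hx
      · rw [Function.update_of_ne hij]
        exact hwK (subset_convexHull ℝ _ ⟨i, rfl⟩)
    have hle : ENNReal.ofReal |b.coord j x| * volume S ≤ 1 * volume S := by
      rw [one_mul, ← hvol, himg]
      exact hmax _ hsub
    rw [ENNReal.mul_le_mul_iff_left hSpos.ne' hSfin.ne] at hle
    rwa [ENNReal.ofReal_le_one] at hle
  -- barycentric coordinates of the centroid
  have hcent : ∀ i, b.coord i c = ((d : ℝ) + 1)⁻¹ := by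
    intro i
    have hc' : c = Finset.univ.centroid ℝ w := by
      rw [Finset.centroid_def,
        Finset.affineCombination_eq_linear_combination _ _ _
          (Finset.univ.sum_centroidWeights_eq_one_of_nonempty ℝ ⟨i, Finset.mem_univ i⟩)]
      simp only [Finset.centroidWeights, Function.const_apply, Finset.card_univ,
        Fintype.card_fin]
      rw [hc, ← Finset.smul_sum]
      congr 1
      push_cast
      ring
    rw [hc']
    have := b.coord_apply_centroid (s := Finset.univ) (i := i) (Finset.mem_univ i)
    rw [hbw] at this
    rw [this]
    simp [Finset.card_univ]
  -- main argument
  rintro z ⟨x, hx, rfl⟩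
  rcases Nat.eq_zero_or_pos d with hd | hd
  · subst hd
    have hsub : Subsingleton (EuclideanSpace ℝ (Fin 0)) :=
      ⟨fun a b => by ext i; exact Fin.elim0 i⟩
    exact ⟨x - c, ⟨x, hx, rfl⟩, Subsingleton.elim _ _⟩
  · have hd0 : (d : ℝ) ≠ 0 := Nat.cast_ne_zero.mpr hd.ne'
    have hdpos : (0 : ℝ) < d := Nat.cast_pos.mpr hd
    set y := c + (d : ℝ)⁻¹ • (c - x) with hy
    have hyK : y ∈ K := by
      apply hwK
      have hhull : S = {z | ∀ i, 0 ≤ b.coord i z} := by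
        rw [hS, ← hbw]
        exact b.convexHull_eq_nonneg_coord
      rw [hS] at hhull ⊢
      rw [hhull]
      intro i
      have hcoordy : b.coord i y = (d : ℝ)⁻¹ * (b.coord i c - b.coord i x) + b.coord i c := by
        have hv : y = ((d : ℝ)⁻¹ • (c - x)) +ᵥ c := by rw [hy]; rw [vadd_eq_add]; abel
        have hvsub : (b.coord i).linear (c - x) = b.coord i c - b.coord i x :=
          (b.coord i).linearMap_vsub c x
        rw [hv, (b.coord i).map_vadd, vadd_eq_add, (b.coord i).linear.map_smul, smul_eq_mul,
          hvsub]
      have hx1 : b.coord i x ≤ 1 := (abs_le.mp (key x hx i)).2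
      rw [hcoordy, hcent i]
      have heq : (d : ℝ)⁻¹ * (((d : ℝ) + 1)⁻¹ - b.coord i x) + ((d : ℝ) + 1)⁻¹
          = (1 - b.coord i x) / d := by
        field_simp
        ring
      rw [heq]
      apply div_nonneg (by linarith) hdpos.le
    refine ⟨y - c, ⟨y, hyK, rfl⟩, ?_⟩
    show (-(d : ℝ)) • (y - c) = x - c
    rw [hy, add_sub_cancel_left, smul_smul]
    have : -(d : ℝ) * (d : ℝ)⁻¹ = -1 := by field_simp
    rw [this, neg_one_smul, neg_sub]
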